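/- Let π* ∈ ℝ, σ > 0, a < b, and define Z(m) = Φ((b - π*)·σ·m^{-1/2}) - Φ((a - π*)·σ·m^{-1/2}) for m > 0, where Φ is the standard normal CDF. Then as m → 0⁺, m·ln Z(m) converges to 0 if a ≤ π* ≤ b (with π* in the open interval suffices for value 0), to -(σ²/2)(a - π*)² if π* < a, and to -(σ²/2)(b - π*)² if π* > b. -/

import Mathlib

open Real MeasureTheory Set Filter

/-- Standard normal probability density function. -/
noncomputable def stdPhi (x : ℝ) : ℝ := (Real.sqrt (2 * π))⁻¹ * Real.exp (-x ^ 2 / 2)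

/-- Standard normal cumulative distribution function. -/
noncomputable def stdCDF (y : ℝ) : ℝ := ∫ x in Iic y, stdPhi x

lemma stdPhi_pos (x : ℝ) : 0 < stdPhi x := by
  unfold stdPhi
  have : (0:ℝ) < 2 * π := by positivity
  positivity

lemma stdPhi_integrable : Integrable stdPhi := by
  have h : Integrable fun x : ℝ => Real.exp (-(2⁻¹ : ℝ) * x ^ 2) :=
    integrable_exp_neg_mul_sq (by norm_num)
  have := h.const_mul (Real.sqrt (2 * π))⁻¹
  refine this.congr ?_
  filter_upwards with x
  unfold stdPhi
  ring_nf

lemma stdPhi_integral : ∫ x, stdPhi x = 1 := by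
  unfold stdPhi
  rw [integral_const_mul]
  have : ∀ x : ℝ, -x ^ 2 / 2 = -(2⁻¹ : ℝ) * x ^ 2 := fun x => by ring
  simp_rw [this, integral_gaussian]
  rw [show π / (2⁻¹:ℝ) = 2 * π by ring]
  have h2π : (0:ℝ) < 2 * π := by positivity
  rw [inv_mul_cancel₀ (by positivity)]

lemma stdPhi_anti {x y : ℝ} (h : x ^ 2 ≤ y ^ 2) : stdPhi y ≤ stdPhi x := by
  unfold stdPhi
  have h2π : (0:ℝ) < 2 * π := by positivity
  have he : Real.exp (-y ^ 2 / 2) ≤ Real.exp (-x ^ 2 / 2) :=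
    Real.exp_le_exp.2 (by linarith)
  exact mul_le_mul_of_nonneg_left he (by positivity)

lemma stdCDF_sub (y₁ y₂ : ℝ) : stdCDF y₂ - stdCDF y₁ = ∫ x in y₁..y₂, stdPhi x :=
  intervalIntegral.integral_Iic_sub_Iic stdPhi_integrable.integrableOn
    stdPhi_integrable.integrableOn

lemma stdCDF_sub_Ioc {y₁ y₂ : ℝ} (h : y₁ ≤ y₂) :
    stdCDF y₂ - stdCDF y₁ = ∫ x in Ioc y₁ y₂, stdPhi x := by
  rw [stdCDF_sub, intervalIntegral.integral_of_le h]

lemma stdCDF_sub_neg (y₁ y₂ : ℝ) :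
    stdCDF y₂ - stdCDF y₁ = stdCDF (-y₁) - stdCDF (-y₂) := by
  rw [stdCDF_sub, stdCDF_sub, ← intervalIntegral.integral_comp_neg stdPhi]
  congr 1
  funext x
  simp [stdPhi, neg_sq]

lemma integral_Ioc_le_const {y₁ y₂ c : ℝ} (h : y₁ ≤ y₂)
    (hc : ∀ x ∈ Ioc y₁ y₂, stdPhi x ≤ c) :
    ∫ x in Ioc y₁ y₂, stdPhi x ≤ (y₂ - y₁) * c := by
  have := setIntegral_mono_on (μ := volume) (f := stdPhi) (g := fun _ => c)
    stdPhi_integrable.integrableOn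
    (integrableOn_const measure_Ioc_lt_top.ne) measurableSet_Ioc hc
  simpa [Real.volume_Ioc, ENNReal.toReal_ofReal (sub_nonneg.2 h), max_eq_left (sub_nonneg.2 h)] using this

lemma const_le_integral_Ioc {y₁ y₂ c : ℝ} (h : y₁ ≤ y₂)
    (hc : ∀ x ∈ Ioc y₁ y₂, c ≤ stdPhi x) :
    (y₂ - y₁) * c ≤ ∫ x in Ioc y₁ y₂, stdPhi x := by
  have := setIntegral_mono_on (μ := volume) (f := fun _ => c) (g := stdPhi)
    (integrableOn_const measure_Ioc_lt_top.ne)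
    stdPhi_integrable.integrableOn measurableSet_Ioc hc
  simpa [Real.volume_Ioc, ENNReal.toReal_ofReal (sub_nonneg.2 h), max_eq_left (sub_nonneg.2 h)] using this

lemma tendsto_id_zero : Tendsto (fun m : ℝ => m) (nhdsWithin 0 (Ioi 0)) (nhds 0) :=
  (continuous_id.tendsto 0).mono_left nhdsWithin_le_nhds

lemma tendsto_sqrt_zero : Tendsto (fun m : ℝ => Real.sqrt m) (nhdsWithin 0 (Ioi 0)) (nhds 0) := by
  have h := (Real.continuous_sqrt.tendsto 0).mono_left
    (nhdsWithin_le_nhds (s := Ioi (0:ℝ)))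
  simpa using h

lemma tendsto_mul_log_zero :
    Tendsto (fun m : ℝ => m * Real.log m) (nhdsWithin 0 (Ioi 0)) (nhds 0) := by
  have h := tendsto_log_mul_rpow_nhdsGT_zero zero_lt_one
  refine h.congr fun x => ?_
  rw [Real.rpow_one, mul_comm]

lemma aux_main (c d : ℝ) (hc : 0 < c) (hcd : c < d) :
    Tendsto (fun m => m * Real.log (stdCDF (d * (Real.sqrt m)⁻¹) - stdCDF (c * (Real.sqrt m)⁻¹)))
      (nhdsWithin 0 (Ioi 0)) (nhds (-(c ^ 2 / 2))) := by
  have hCpos : (0:ℝ) < (Real.sqrt (2 * π))⁻¹ := by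
    have : (0:ℝ) < 2 * π := by positivity
    positivity
  set C : ℝ := (Real.sqrt (2 * π))⁻¹ with hC
  have hepos : 0 < min c (d - c) := lt_min hc (by linarith)
  set e : ℝ := min c (d - c) with he
  have hlow : Tendsto (fun m : ℝ => m * Real.log C - (c + Real.sqrt m) ^ 2 / 2)
      (nhdsWithin 0 (Ioi 0)) (nhds (-(c ^ 2 / 2))) := by
    have h := (tendsto_id_zero.mul_const (Real.log C)).sub
      ((((tendsto_const_nhds (x := c)).add tendsto_sqrt_zero).pow 2).div_const 2)
    rw [show (0:ℝ) * Real.log C - (c + 0) ^ 2 / 2 = -(c ^ 2 / 2) from by ring] at h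
    exact h
  have hhigh : Tendsto
      (fun m : ℝ => m * (Real.log (d - c) + Real.log C) - m * Real.log m / 2 - c ^ 2 / 2)
      (nhdsWithin 0 (Ioi 0)) (nhds (-(c ^ 2 / 2))) := by
    have h := ((tendsto_id_zero.mul_const (Real.log (d - c) + Real.log C)).sub
      (tendsto_mul_log_zero.div_const 2)).sub (tendsto_const_nhds (x := c ^ 2 / 2))
    rw [show (0:ℝ) * (Real.log (d - c) + Real.log C) - 0 / 2 - c ^ 2 / 2 = -(c ^ 2 / 2)
      from by ring] at h
    exact h
  have key : ∀ m : ℝ, 0 < m → m ≤ e ^ 2 →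
      (m * Real.log C - (c + Real.sqrt m) ^ 2 / 2 ≤
        m * Real.log (stdCDF (d * (Real.sqrt m)⁻¹) - stdCDF (c * (Real.sqrt m)⁻¹))) ∧
      (m * Real.log (stdCDF (d * (Real.sqrt m)⁻¹) - stdCDF (c * (Real.sqrt m)⁻¹)) ≤
        m * (Real.log (d - c) + Real.log C) - m * Real.log m / 2 - c ^ 2 / 2) := by
    intro m hm0 hme
    set s : ℝ := Real.sqrt m with hs
    have hspos : 0 < s := Real.sqrt_pos.2 hm0
    have hs2 : s ^ 2 = m := Real.sq_sqrt hm0.le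
    have hse : s ≤ e := by
      calc s ≤ Real.sqrt (e ^ 2) := Real.sqrt_le_sqrt hme
      _ = e := Real.sqrt_sq hepos.le
    have hsc : s ≤ c := hse.trans (min_le_left _ _)
    have hsdc : s ≤ d - c := hse.trans (min_le_right _ _)
    have hxc1 : 1 ≤ c * s⁻¹ := by
      have h1 : (1:ℝ) ≤ c / s := (one_le_div hspos).2 hsc
      rwa [div_eq_mul_inv] at h1
    have hgap : c * s⁻¹ + 1 ≤ d * s⁻¹ := by
      have h1 : (1:ℝ) ≤ (d - c) / s := (one_le_div hspos).2 hsdc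
      have h2 : (d - c) / s = d * s⁻¹ - c * s⁻¹ := by
        rw [div_eq_mul_inv, sub_mul]
      linarith
    have hxcd : c * s⁻¹ ≤ d * s⁻¹ := by linarith
    have hxcpos : 0 < c * s⁻¹ := by linarith
    have hZeq : stdCDF (d * s⁻¹) - stdCDF (c * s⁻¹) = ∫ x in Ioc (c * s⁻¹) (d * s⁻¹), stdPhi x :=
      stdCDF_sub_Ioc hxcd
    have hlb : stdPhi (c * s⁻¹ + 1) ≤ ∫ x in Ioc (c * s⁻¹) (d * s⁻¹), stdPhi x := by
      have h1 : ∫ x in Ioc (c * s⁻¹) (c * s⁻¹ + 1), stdPhi x ≤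
          ∫ x in Ioc (c * s⁻¹) (d * s⁻¹), stdPhi x :=
        setIntegral_mono_set stdPhi_integrable.integrableOn
          (ae_of_all _ fun x => (stdPhi_pos x).le)
          (HasSubset.Subset.eventuallyLE (Ioc_subset_Ioc_right hgap))
      have h2 : (c * s⁻¹ + 1 - c * s⁻¹) * stdPhi (c * s⁻¹ + 1) ≤
          ∫ x in Ioc (c * s⁻¹) (c * s⁻¹ + 1), stdPhi x := by
        refine const_le_integral_Ioc (by linarith) fun x hx => ?_
        exact stdPhi_anti (by nlinarith [hx.1, hx.2])
      calc stdPhi (c * s⁻¹ + 1) = (c * s⁻¹ + 1 - c * s⁻¹) * stdPhi (c * s⁻¹ + 1) := by ring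
      _ ≤ _ := h2
      _ ≤ _ := h1
    have hZpos : 0 < ∫ x in Ioc (c * s⁻¹) (d * s⁻¹), stdPhi x := (stdPhi_pos _).trans_le hlb
    have hub : ∫ x in Ioc (c * s⁻¹) (d * s⁻¹), stdPhi x ≤
        (d * s⁻¹ - c * s⁻¹) * stdPhi (c * s⁻¹) := by
      refine integral_Ioc_le_const hxcd fun x hx => ?_
      exact stdPhi_anti (by nlinarith [hx.1, hx.2])
    constructor
    · have hlog : Real.log (stdPhi (c * s⁻¹ + 1)) ≤
          Real.log (stdCDF (d * s⁻¹) - stdCDF (c * s⁻¹)) := by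
        rw [hZeq]; exact Real.log_le_log (stdPhi_pos _) hlb
      refine le_trans (le_of_eq ?_) (mul_le_mul_of_nonneg_left hlog hm0.le)
      have hphi : Real.log (stdPhi (c * s⁻¹ + 1)) = Real.log C + (-(c * s⁻¹ + 1) ^ 2 / 2) := by
        rw [stdPhi, Real.log_mul (ne_of_gt hCpos) (Real.exp_ne_zero _), Real.log_exp, hC]
      rw [hphi]
      have hsq : m * (c * s⁻¹ + 1) ^ 2 = (c + s) ^ 2 := by
        have hx1 : c * s⁻¹ + 1 = (c + s) / s := by field_simp
        rw [hx1, div_pow, hs2]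
        field_simp
      rw [← hsq]; ring
    · have hlog : Real.log (stdCDF (d * s⁻¹) - stdCDF (c * s⁻¹)) ≤
          Real.log ((d * s⁻¹ - c * s⁻¹) * stdPhi (c * s⁻¹)) := by
        rw [hZeq]; exact Real.log_le_log hZpos hub
      refine le_trans (mul_le_mul_of_nonneg_left hlog hm0.le) (le_of_eq ?_)
      have hdcpos : (0:ℝ) < d - c := by linarith
      have hphi : Real.log ((d * s⁻¹ - c * s⁻¹) * stdPhi (c * s⁻¹)) =
          Real.log (d - c) - Real.log s + Real.log C + (-(c * s⁻¹) ^ 2 / 2) := by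
        rw [show d * s⁻¹ - c * s⁻¹ = (d - c) * s⁻¹ from by ring, stdPhi,
          Real.log_mul (by positivity) (by positivity),
          Real.log_mul (ne_of_gt hdcpos) (by positivity), Real.log_inv,
          Real.log_mul (ne_of_gt hCpos) (Real.exp_ne_zero _), Real.log_exp, hC]
        ring
      rw [hphi]
      have hlogs : Real.log s = Real.log m / 2 := Real.log_sqrt hm0.le
      have hxcsq : m * (c * s⁻¹) ^ 2 = c ^ 2 := by
        rw [mul_pow, ← hs2]
        field_simp
      rw [hlogs, ← hxcsq]; ring
  refine tendsto_of_tendsto_of_tendsto_of_le_of_le' hlow hhigh ?_ ?_ <;>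
    filter_upwards [Ioc_mem_nhdsGT (show (0:ℝ) < e ^ 2 by positivity)] with m hm
  · exact (key m hm.1 hm.2).1
  · exact (key m hm.1 hm.2).2

lemma stdCDF_nonneg (y : ℝ) : 0 ≤ stdCDF y :=
  setIntegral_nonneg measurableSet_Iic fun x _ => (stdPhi_pos x).le

lemma stdCDF_le_one (y : ℝ) : stdCDF y ≤ 1 := by
  rw [← stdPhi_integral]
  exact setIntegral_le_integral stdPhi_integrable (ae_of_all _ fun x => (stdPhi_pos x).le)

/-- Limits of `m ↦ m ln Z(m)` as `m → 0⁺`, where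
`Z(m) = Φ((b - π*) σ m^{-1/2}) - Φ((a - π*) σ m^{-1/2})`. -/
theorem limit_m_log_Z (piM σ a b : ℝ) (hσ : 0 < σ) (hab : a < b)
    (Z : ℝ → ℝ)
    (hZ : ∀ m, Z m =
      stdCDF ((b - piM) * σ * (Real.sqrt m)⁻¹) - stdCDF ((a - piM) * σ * (Real.sqrt m)⁻¹)) :
    (a < piM → piM < b →
      Tendsto (fun m => m * Real.log (Z m)) (nhdsWithin 0 (Ioi 0)) (nhds 0)) ∧
    (piM < a →
      Tendsto (fun m => m * Real.log (Z m)) (nhdsWithin 0 (Ioi 0))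
        (nhds (-(σ ^ 2 / 2 * (a - piM) ^ 2)))) ∧
    (piM > b →
      Tendsto (fun m => m * Real.log (Z m)) (nhdsWithin 0 (Ioi 0))
        (nhds (-(σ ^ 2 / 2 * (b - piM) ^ 2)))) := by
  refine ⟨?_, ?_, ?_⟩
  · -- middle case
    intro h1 h2
    have hepos : 0 < min ((piM - a) * σ) ((b - piM) * σ) :=
      lt_min (mul_pos (by linarith) hσ) (mul_pos (by linarith) hσ)
    set e : ℝ := min ((piM - a) * σ) ((b - piM) * σ) with he
    have hc0 : 0 < 2 * stdPhi 1 := by have := stdPhi_pos 1; linarith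
    have key : ∀ m : ℝ, 0 < m → m ≤ e ^ 2 →
        m * Real.log (2 * stdPhi 1) ≤ m * Real.log (Z m) ∧ m * Real.log (Z m) ≤ 0 := by
      intro m hm0 hme
      set s : ℝ := Real.sqrt m with hs
      have hspos : 0 < s := Real.sqrt_pos.2 hm0
      have hse : s ≤ e := by
        calc s ≤ Real.sqrt (e ^ 2) := Real.sqrt_le_sqrt hme
        _ = e := Real.sqrt_sq hepos.le
      have hsa : s ≤ (piM - a) * σ := hse.trans (min_le_left _ _)
      have hsb : s ≤ (b - piM) * σ := hse.trans (min_le_right _ _)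
      have hxa : (a - piM) * σ * s⁻¹ ≤ -1 := by
        have h1 : (1:ℝ) ≤ ((piM - a) * σ) / s := (one_le_div hspos).2 hsa
        have h2 : ((piM - a) * σ) / s = -((a - piM) * σ * s⁻¹) := by
          field_simp; ring
        linarith
      have hxb : 1 ≤ (b - piM) * σ * s⁻¹ := by
        have h1 : (1:ℝ) ≤ ((b - piM) * σ) / s := (one_le_div hspos).2 hsb
        rwa [div_eq_mul_inv] at h1
      have hxab : (a - piM) * σ * s⁻¹ ≤ (b - piM) * σ * s⁻¹ := by linarith
      have hZeq : Z m = ∫ x in Ioc ((a - piM) * σ * s⁻¹) ((b - piM) * σ * s⁻¹), stdPhi x := by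
        rw [hZ m]; exact stdCDF_sub_Ioc hxab
      have hlb : 2 * stdPhi 1 ≤ Z m := by
        rw [hZeq]
        have h1 : ∫ x in Ioc (-1 : ℝ) 1, stdPhi x ≤
            ∫ x in Ioc ((a - piM) * σ * s⁻¹) ((b - piM) * σ * s⁻¹), stdPhi x :=
          setIntegral_mono_set stdPhi_integrable.integrableOn
            (ae_of_all _ fun x => (stdPhi_pos x).le)
            (HasSubset.Subset.eventuallyLE (Ioc_subset_Ioc hxa hxb))
        have h2 : ((1:ℝ) - (-1)) * stdPhi 1 ≤ ∫ x in Ioc (-1 : ℝ) 1, stdPhi x := by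
          refine const_le_integral_Ioc (by norm_num) fun x hx => ?_
          exact stdPhi_anti (by nlinarith [hx.1, hx.2])
        calc 2 * stdPhi 1 = ((1:ℝ) - (-1)) * stdPhi 1 := by ring
        _ ≤ _ := h2
        _ ≤ _ := h1
      have hub : Z m ≤ 1 := by
        rw [hZ m]
        have := stdCDF_le_one ((b - piM) * σ * s⁻¹)
        have := stdCDF_nonneg ((a - piM) * σ * s⁻¹)
        linarith
      constructor
      · exact mul_le_mul_of_nonneg_left (Real.log_le_log hc0 hlb) hm0.le
      · exact mul_nonpos_of_nonneg_of_nonpos hm0.le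
          (Real.log_nonpos (by linarith [hc0, hlb]) hub)
    have hlow : Tendsto (fun m : ℝ => m * Real.log (2 * stdPhi 1))
        (nhdsWithin 0 (Ioi 0)) (nhds 0) := by
      have h := tendsto_id_zero.mul_const (Real.log (2 * stdPhi 1))
      rwa [zero_mul] at h
    refine tendsto_of_tendsto_of_tendsto_of_le_of_le' hlow tendsto_const_nhds ?_ ?_ <;>
      filter_upwards [Ioc_mem_nhdsGT (show (0:ℝ) < e ^ 2 by positivity)] with m hm
    · exact (key m hm.1 hm.2).1
    · exact (key m hm.1 hm.2).2
  · -- piM < a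
    intro h1
    have h := aux_main ((a - piM) * σ) ((b - piM) * σ) (mul_pos (by linarith) hσ)
      (by nlinarith)
    rw [show -(σ ^ 2 / 2 * (a - piM) ^ 2) = -(((a - piM) * σ) ^ 2 / 2) from by ring]
    exact h.congr fun m => by rw [hZ m]
  · -- piM > b
    intro h1
    have h := aux_main ((piM - b) * σ) ((piM - a) * σ) (mul_pos (by linarith) hσ)
      (by nlinarith)
    rw [show -(σ ^ 2 / 2 * (b - piM) ^ 2) = -(((piM - b) * σ) ^ 2 / 2) from by ring]
    refine h.congr fun m => ?_
    rw [hZ m, stdCDF_sub_neg,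
      show -((piM - b) * σ * (Real.sqrt m)⁻¹) = (b - piM) * σ * (Real.sqrt m)⁻¹ from by ring,
      show -((piM - a) * σ * (Real.sqrt m)⁻¹) = (a - piM) * σ * (Real.sqrt m)⁻¹ from by ring]
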